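/- Let c > 0 and let k, t be positive integers. Then for every nonnegative n×n real matrix S with γ(S) = c, the Hausdorff distance between C(C(S,t),k) and C(S,k) is at most 2ck/t, where C(C(S,t),k) := ⋃_{X ∈ C(S,t)} C(X,k). -/

import Mathlib

open MeasureTheory Matrix
open scoped Pointwise

noncomputable section

/-- The Cantor set `{0,1}^ℕ`. -/
abbrev Cantor : Type := ℕ → Bool

/-- Cylinder set of a binary string given as a function `Fin n → Bool`. -/
def cylF {n : ℕ} (x : Fin n → Bool) : Set Cantor := {ω | ∀ i : Fin n, ω i = x i}

/-- Cylinder set of a binary string given as a list. -/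
def cyl (x : List Bool) : Set Cantor := {ω | ∀ i : Fin x.length, ω i = x.get i}

/-- `ν` is the fair coin-flipping (uniform product) measure on the Cantor set:
the unique Borel probability measure giving every cylinder of depth `n` mass `2⁻ⁿ`. -/
def IsCoinMeasure (ν : Measure Cantor) : Prop :=
  IsProbabilityMeasure ν ∧ ∀ (n : ℕ) (x : Fin n → Bool), ν (cylF x) = (1 / 2 : ENNReal) ^ n

/-- `K(k,n)`: nonnegative `k × I` matrices with all row sums `|I|/k` and all column sums `1`. -/
def Kset (k : ℕ) (I : Type) [Fintype I] : Set (Matrix (Fin k) I ℝ) :=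
  {M | (∀ i j, 0 ≤ M i j) ∧ (∀ i, ∑ j, M i j = (Fintype.card I : ℝ) / k) ∧
       (∀ j, ∑ i, M i j = 1)}

/-- The `k`-shape `C(S,k) = {M S Mᵀ : M ∈ K(k,n)}` of a square matrix `S`. -/
def matShape {I : Type} [Fintype I] (S : Matrix I I ℝ) (k : ℕ) :
    Set (Matrix (Fin k) (Fin k) ℝ) :=
  (fun M => M * S * Mᵀ) '' Kset k I

/-- `γ(S)`: the sum of all entries of `S`. -/
def gamma {I : Type} [Fintype I] (S : Matrix I I ℝ) : ℝ := ∑ i, ∑ j, S i j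

/-- The entrywise ℓ¹ norm of a matrix. -/
def l1 {k : ℕ} (A : Matrix (Fin k) (Fin k) ℝ) : ℝ := ∑ i, ∑ j, |A i j|

/-- The Hausdorff distance (w.r.t. the entrywise ℓ¹ norm) between `A` and `B` is at most `ε`. -/
def hdistLE {k : ℕ} (A B : Set (Matrix (Fin k) (Fin k) ℝ)) (ε : ℝ) : Prop :=
  (∀ X ∈ A, ∃ Y ∈ B, l1 (X - Y) ≤ ε) ∧ (∀ Y ∈ B, ∃ X ∈ A, l1 (X - Y) ≤ ε)

/-- Convergence of a sequence of shapes to `L` in the ℓ¹-Hausdorff metric. -/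
def ShapeTendsto {k : ℕ} (C : ℕ → Set (Matrix (Fin k) (Fin k) ℝ))
    (L : Set (Matrix (Fin k) (Fin k) ℝ)) : Prop :=
  ∀ ε : ℝ, 0 < ε → ∃ N : ℕ, ∀ n ≥ N, hdistLE (C n) L ε

/-- `C₀(μ,k)`: matrices `M` with `M i j = ∫ fᵢ(x) fⱼ(y) dμ` for a measurable partition of unity
`f₁,…,f_k` with `∫ fᵢ dν = 1/k`. -/
def mShape0 {α : Type} [MeasurableSpace α] (ν : Measure α) (μ : Measure (α × α)) (k : ℕ) :
    Set (Matrix (Fin k) (Fin k) ℝ) :=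
  {M | ∃ f : Fin k → α → ℝ,
    (∀ i, Measurable (f i)) ∧ (∀ i x, 0 ≤ f i x) ∧ (∀ x, ∑ i, f i x = 1) ∧
    (∀ i, ∫ x, f i x ∂ν = 1 / k) ∧
    (∀ i j, M i j = ∫ p, f i p.1 * f j p.2 ∂μ)}

/-- `C(μ,k)`: the topological closure of `C₀(μ,k)`. -/
def mShape {α : Type} [MeasurableSpace α] (ν : Measure α) (μ : Measure (α × α)) (k : ℕ) :
    Set (Matrix (Fin k) (Fin k) ℝ) := closure (mShape0 ν μ k)

/-- `C_c(μ,k)`: as `C₀(μ,k)` but with continuous witness functions. -/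
def mShapeC (ν : Measure Cantor) (μ : Measure (Cantor × Cantor)) (k : ℕ) :
    Set (Matrix (Fin k) (Fin k) ℝ) :=
  {M | ∃ f : Fin k → Cantor → ℝ,
    (∀ i, Continuous (f i)) ∧ (∀ i x, 0 ≤ f i x) ∧ (∀ x, ∑ i, f i x = 1) ∧
    (∀ i, ∫ x, f i x ∂ν = 1 / k) ∧
    (∀ i j, M i j = ∫ p, f i p.1 * f j p.2 ∂μ)}

open Classical in
/-- The real adjacency matrix of a simple graph. -/
def adjMat {V : Type} [Fintype V] (G : SimpleGraph V) : Matrix V V ℝ :=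
  fun a b => if G.Adj a b then 1 else 0

/-- `C₀(G,k) = ‖A_G‖₁⁻¹ ⬝ C(A_G,k)` for a finite graph `G`. -/
def graphShape {V : Type} [Fintype V] (G : SimpleGraph V) (k : ℕ) :
    Set (Matrix (Fin k) (Fin k) ℝ) :=
  (gamma (adjMat G))⁻¹ • matShape (adjMat G) k

/-- `K̂(k,m)`: characteristic matrices of balanced partitions of `{1,…,m}` into `k` classes. -/
def Khat (k m : ℕ) : Set (Matrix (Fin k) (Fin m) ℝ) :=
  {M | (∀ i j, M i j = 0 ∨ M i j = 1) ∧ (∀ j, ∑ i, M i j = 1) ∧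
       (∀ i, ∑ j, M i j = (⌈(m : ℝ) / k⌉₊ : ℝ) ∨ ∑ j, M i j = (⌊(m : ℝ) / k⌋₊ : ℝ))}

/-- `C̃₀(μ,α)`: matrices coming from a measurable partition of unity with `∫ fᵢ dν = αᵢ`. -/
def tShape0 {α : Type} [MeasurableSpace α] (ν : Measure α) (μ : Measure (α × α)) {m : ℕ}
    (a : Fin m → ℝ) : Set (Matrix (Fin m) (Fin m) ℝ) :=
  {M | ∃ f : Fin m → α → ℝ,
    (∀ i, Measurable (f i)) ∧ (∀ i x, 0 ≤ f i x) ∧ (∀ x, ∑ i, f i x = 1) ∧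
    (∀ i, ∫ x, f i x ∂ν = a i) ∧
    (∀ i j, M i j = ∫ p, f i p.1 * f j p.2 ∂μ)}

/-- `C̃(μ,α)`: the topological closure of `C̃₀(μ,α)`. -/
def tShape {α : Type} [MeasurableSpace α] (ν : Measure α) (μ : Measure (α × α)) {m : ℕ}
    (a : Fin m → ℝ) : Set (Matrix (Fin m) (Fin m) ℝ) := closure (tShape0 ν μ a)

/-- The Hausdorff distance w.r.t. the entrywise ℓ∞ norm between `A` and `B` is at most `ε`. -/
def hdistInfLE {m : ℕ} (A B : Set (Matrix (Fin m) (Fin m) ℝ)) (ε : ℝ) : Prop :=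
  (∀ X ∈ A, ∃ Y ∈ B, ∀ i j, |X i j - Y i j| ≤ ε) ∧
  (∀ Y ∈ B, ∃ X ∈ A, ∀ i j, |X i j - Y i j| ≤ ε)

namespace Stmt12Aux


/-- overlap length of `[a,b] ∩ [x,y]`. -/
def ov (a b x y : ℝ) : ℝ := max 0 (min b y - max a x)

lemma ov_nonneg (a b x y : ℝ) : 0 ≤ ov a b x y := le_max_left _ _

lemma ov_comm (a b x y : ℝ) : ov a b x y = ov x y a b := by
  simp only [ov, min_comm, max_comm]

lemma ov_le_len (a b x y : ℝ) (hxy : x ≤ y) : ov a b x y ≤ y - x := by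
  unfold ov
  apply max_le (by linarith)
  have h1 : min b y ≤ y := min_le_right _ _
  have h2 : x ≤ max a x := le_max_right _ _
  linarith

lemma ov_eq_sub (a b x y : ℝ) (hab : a ≤ b) (hxy : x ≤ y) :
    ov a b x y = min b (max a y) - min b (max a x) := by
  unfold ov
  rcases le_total a x with h1|h1 <;> rcases le_total a y with h2|h2 <;>
    rcases le_total b x with h3|h3 <;> rcases le_total b y with h4|h4 <;>
    simp [min_def, max_def] <;> split_ifs <;> linarith

lemma telescope (q : ℕ) (f : ℕ → ℝ) :
    ∑ i : Fin q, (f (i + 1) - f i) = f q - f 0 := by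
  rw [Fin.sum_univ_eq_sum_range (fun i => f (i + 1) - f i)]
  exact Finset.sum_range_sub f q

lemma sum_ov_cols (t : ℕ) (a b : ℝ) (h0 : 0 ≤ a) (hab : a ≤ b) (hb : b ≤ t) :
    ∑ m : Fin t, ov a b m (m + 1) = b - a := by
  have key : ∀ m : Fin t, ov a b m (m + 1)
      = (fun s : ℕ => min b (max a s)) ((m : ℕ) + 1) - (fun s : ℕ => min b (max a s)) m := by
    intro m
    have := ov_eq_sub a b (m : ℝ) ((m : ℝ) + 1) hab (by linarith)
    simp only [this]
    push_cast
    ring_nf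
  have tel := telescope t (fun s : ℕ => min b (max a (s : ℝ)))
  simp only [key]
  rw [tel]
  have h1 : max a (t : ℝ) = t := max_eq_right (le_trans hab hb)
  have h2 : max a ((0 : ℕ) : ℝ) = a := by simpa using max_eq_left h0
  rw [h1, h2]
  rw [min_eq_left hb, min_eq_right hab]

lemma sum_ov_rows (q : ℕ) (T x y : ℝ) (hT : 0 ≤ T) (h0 : 0 ≤ x) (hxy : x ≤ y)
    (hy : y ≤ q * T) : ∑ i : Fin q, ov ((i : ℝ) * T) (((i : ℝ) + 1) * T) x y = y - x := by
  have key : ∀ i : Fin q, ov ((i : ℝ) * T) (((i : ℝ) + 1) * T) x y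
      = (fun s : ℕ => min y (max x ((s : ℝ) * T))) ((i : ℕ) + 1)
        - (fun s : ℕ => min y (max x ((s : ℝ) * T))) i := by
    intro i
    rw [ov_comm]
    have := ov_eq_sub x y ((i : ℝ) * T) (((i : ℝ) + 1) * T) hxy
      (by nlinarith)
    simp only [this]
    push_cast
    ring_nf
  have tel := telescope q (fun s : ℕ => min y (max x ((s : ℝ) * T)))
  simp only [key]
  rw [tel]
  have h1 : max x ((q : ℝ) * T) = (q : ℝ) * T := max_eq_right (le_trans hxy hy)
  have h2 : max x (((0:ℕ) : ℝ) * T) = x := by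
    simpa using max_eq_left h0
  rw [h1, h2, min_eq_left hy, min_eq_right hxy]

lemma boundary (a b : ℝ) (m : ℕ) (ha : 0 ≤ a)
    (h0 : 0 < ov a b m (m + 1)) (h1 : ov a b m (m + 1) < 1) :
    m = ⌊a⌋₊ ∨ m = ⌊b⌋₊ := by
  have hpos : (m : ℝ) < min b (m + 1) ∧ max a m < min b (m + 1) := by
    constructor
    · have : max a (m : ℝ) < min b (m+1) := by
        by_contra h
        push_neg at h
        have : ov a b m (m+1) = 0 := by
          unfold ov; rw [max_eq_left]; linarith
        linarith
      exact lt_of_le_of_lt (le_max_right a m) this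
    · by_contra h
      push_neg at h
      have : ov a b m (m+1) = 0 := by
        unfold ov; rw [max_eq_left]; linarith
      linarith
  obtain ⟨hm, hmax⟩ := hpos
  have hbm : (m : ℝ) < b := lt_of_lt_of_le hm (min_le_left _ _)
  have ham : a < (m : ℝ) + 1 := by
    have := lt_of_le_of_lt (le_max_left a (m:ℝ)) (lt_of_lt_of_le hmax (min_le_right _ _))
    linarith [lt_of_le_of_lt (le_max_left a (m:ℝ)) hmax, min_le_right b ((m:ℝ)+1)]
  have hcase : (m : ℝ) < a ∨ b < (m : ℝ) + 1 := by
    by_contra h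
    push_neg at h
    obtain ⟨h2, h3⟩ := h
    have : ov a b m (m+1) = 1 := by
      unfold ov
      rw [min_eq_right h3, max_eq_right h2]
      simp
    linarith
  rcases hcase with h | h
  · left
    symm
    rw [Nat.floor_eq_iff ha]
    exact ⟨le_of_lt h, by linarith⟩
  · right
    symm
    rw [Nat.floor_eq_iff (le_of_lt (lt_of_le_of_lt (Nat.cast_nonneg m) hbm))]
    exact ⟨le_of_lt hbm, by linarith⟩

lemma sum_indic (t v : ℕ) (c : ℝ) (hc : 0 ≤ c) :
    ∑ m : Fin t, (if (m : ℕ) = v then c else 0) ≤ c := by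
  rw [Fin.sum_univ_eq_sum_range (fun m => if m = v then c else 0) t]
  rw [Finset.sum_ite_eq' (Finset.range t) v (fun _ => c)]
  split_ifs <;> simp [hc]

lemma sum_ov_sq (t : ℕ) (a b : ℝ) (h0 : 0 ≤ a) (hab : a ≤ b) (hb : b ≤ t) :
    (b - a) - 1 / 2 ≤ ∑ m : Fin t, (ov a b m (m + 1)) ^ 2 := by
  have hsum := sum_ov_cols t a b h0 hab hb
  have key : ∑ m : Fin t, (ov a b m (m + 1) - (ov a b m (m + 1)) ^ 2) ≤ 1 / 2 := by
    have hle : ∀ m : Fin t, ov a b m (m + 1) - (ov a b m (m + 1)) ^ 2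
        ≤ (if (m : ℕ) = ⌊a⌋₊ then (1:ℝ)/4 else 0) + (if (m : ℕ) = ⌊b⌋₊ then (1:ℝ)/4 else 0) := by
      intro m
      set o := ov a b m (m + 1) with ho
      have hon : 0 ≤ o := ov_nonneg _ _ _ _
      have hol : o ≤ 1 := by
        have := ov_le_len a b (m : ℝ) ((m : ℝ) + 1) (by linarith)
        linarith
      by_cases hm : (m : ℕ) = ⌊a⌋₊ ∨ (m : ℕ) = ⌊b⌋₊
      · have hq : o - o ^ 2 ≤ 1 / 4 := by nlinarith [sq_nonneg (o - 1/2)]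
        rcases hm with h | h <;> simp [h] <;> split_ifs <;> linarith
      · push_neg at hm
        have : ¬(0 < o ∧ o < 1) := by
          rintro ⟨hp, hl⟩
          rcases boundary a b m h0 hp hl with h | h
          · exact hm.1 h
          · exact hm.2 h
        have : o ≤ 0 ∨ 1 ≤ o := by
          by_contra h
          push_neg at h
          exact this ⟨h.1, h.2⟩
        have hz : o - o ^ 2 ≤ 0 := by
          rcases this with h | h <;> nlinarith
        have : (0:ℝ) ≤ (if (m : ℕ) = ⌊a⌋₊ then (1:ℝ)/4 else 0) + (if (m : ℕ) = ⌊b⌋₊ then (1:ℝ)/4 else 0) := by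
          split_ifs <;> norm_num
        linarith
    calc ∑ m : Fin t, (ov a b m (m + 1) - (ov a b m (m + 1)) ^ 2)
        ≤ ∑ m : Fin t, ((if (m : ℕ) = ⌊a⌋₊ then (1:ℝ)/4 else 0) + (if (m : ℕ) = ⌊b⌋₊ then (1:ℝ)/4 else 0)) :=
          Finset.sum_le_sum (fun m _ => hle m)
      _ = (∑ m : Fin t, (if (m : ℕ) = ⌊a⌋₊ then (1:ℝ)/4 else 0))
          + (∑ m : Fin t, (if (m : ℕ) = ⌊b⌋₊ then (1:ℝ)/4 else 0)) := Finset.sum_add_distrib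
      _ ≤ 1/4 + 1/4 := add_le_add (sum_indic t _ _ (by norm_num)) (sum_indic t _ _ (by norm_num))
      _ = 1/2 := by norm_num
  have : ∑ m : Fin t, (ov a b m (m + 1) - (ov a b m (m + 1)) ^ 2)
      = (b - a) - ∑ m : Fin t, (ov a b m (m + 1)) ^ 2 := by
    rw [Finset.sum_sub_distrib, hsum]
  linarith [key, this ▸ key]

/-- fractional overlap weights of the `k` row-intervals with the `t` unit columns. -/
def oo (k t : ℕ) (i : Fin k) (m : Fin t) : ℝ :=
  ov ((i : ℝ) * ((t : ℝ) / k)) (((i : ℝ) + 1) * ((t : ℝ) / k)) m ((m : ℝ) + 1)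

section oolem
variable (k t : ℕ)

lemma oo_nonneg (i : Fin k) (m : Fin t) : 0 ≤ oo k t i m := ov_nonneg _ _ _ _

lemma hkR (hk : 0 < k) : (0:ℝ) < (k:ℝ) := by exact_mod_cast hk
lemma htR (ht : 0 < t) : (0:ℝ) < (t:ℝ) := by exact_mod_cast ht

lemma ool (hk : 0 < k) (i : Fin k) : (0:ℝ) ≤ (i : ℝ) * ((t : ℝ) / k)
    ∧ (i : ℝ) * ((t : ℝ) / k) ≤ ((i : ℝ) + 1) * ((t : ℝ) / k)
    ∧ ((i : ℝ) + 1) * ((t : ℝ) / k) ≤ t := by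
  have hK := hkR k hk
  have hT : (0:ℝ) ≤ (t : ℝ) / k := by positivity
  refine ⟨by positivity, by nlinarith, ?_⟩
  have hik : (i : ℝ) + 1 ≤ (k : ℝ) := by
    have := i.isLt
    exact_mod_cast Nat.succ_le_of_lt this
  have : ((i : ℝ) + 1) * ((t : ℝ) / k) ≤ (k : ℝ) * ((t : ℝ) / k) := by
    apply mul_le_mul_of_nonneg_right hik hT
  rwa [mul_div_cancel₀ _ (ne_of_gt hK)] at this

lemma sum_oo_row (hk : 0 < k) (i : Fin k) : ∑ m, oo k t i m = (t : ℝ) / k := by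
  obtain ⟨h0, hab, hb⟩ := ool k t hk i
  have := sum_ov_cols t _ _ h0 hab hb
  unfold oo
  rw [this]; ring

lemma sum_oo_col (hk : 0 < k) (m : Fin t) : ∑ i, oo k t i m = 1 := by
  have hK := hkR k hk
  have hT : (0:ℝ) ≤ (t : ℝ) / k := by positivity
  have hmt : (m : ℝ) + 1 ≤ (k : ℝ) * ((t : ℝ) / k) := by
    rw [mul_div_cancel₀ _ (ne_of_gt hK)]
    exact_mod_cast Nat.succ_le_of_lt m.isLt
  have := sum_ov_rows k ((t : ℝ) / k) m ((m : ℝ) + 1) hT (by positivity) (by linarith) hmt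
  unfold oo
  rw [this]; ring

lemma sum_oo_sq (hk : 0 < k) (i : Fin k) : (t : ℝ) / k - 1 / 2 ≤ ∑ m, (oo k t i m) ^ 2 := by
  obtain ⟨h0, hab, hb⟩ := ool k t hk i
  have := sum_ov_sq t _ _ h0 hab hb
  unfold oo
  have heq : ((i : ℝ) + 1) * ((t : ℝ) / k) - (i : ℝ) * ((t : ℝ) / k) = (t : ℝ) / k := by ring
  linarith [this, heq ▸ this]

end oolem

/-- the doubly stochastic `k × k` averaging matrix. -/
def CC (k t : ℕ) (i i' : Fin k) : ℝ := ((k : ℝ) / t) * ∑ m : Fin t, oo k t i m * oo k t i' m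

section cclem
variable (k t : ℕ)

lemma CC_nonneg (hk : 0 < k) (ht : 0 < t) (i i' : Fin k) : 0 ≤ CC k t i i' := by
  unfold CC
  have hK := hkR k hk; have hT := htR t ht
  apply mul_nonneg (by positivity)
  exact Finset.sum_nonneg fun m _ => mul_nonneg (oo_nonneg _ _ _ _) (oo_nonneg _ _ _ _)

lemma CC_symm (i i' : Fin k) : CC k t i i' = CC k t i' i := by
  unfold CC
  congr 1
  exact Finset.sum_congr rfl fun m _ => mul_comm _ _

lemma CC_row (hk : 0 < k) (ht : 0 < t) (i : Fin k) : ∑ i', CC k t i i' = 1 := by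
  have hK := hkR k hk; have hT := htR t ht
  unfold CC
  rw [← Finset.mul_sum, Finset.sum_comm]
  have : ∀ m : Fin t, ∑ i' : Fin k, oo k t i m * oo k t i' m = oo k t i m := by
    intro m
    rw [← Finset.mul_sum, sum_oo_col k t hk m, mul_one]
  rw [Finset.sum_congr rfl fun m _ => this m, sum_oo_row k t hk i]
  field_simp

lemma CC_diag (hk : 0 < k) (ht : 0 < t) (i : Fin k) : 1 - (k : ℝ) / (2 * t) ≤ CC k t i i := by
  have hK := hkR k hk; have hT := htR t ht
  have h1 := sum_oo_sq k t hk i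
  have h2 : CC k t i i = ((k : ℝ) / t) * ∑ m, (oo k t i m) ^ 2 := by
    unfold CC; congr 1; exact Finset.sum_congr rfl fun m _ => (sq (oo k t i m)).symm
  have h3 : ((k : ℝ) / t) * ((t : ℝ) / k - 1 / 2) = 1 - (k : ℝ) / (2 * t) := by
    field_simp
  rw [h2, ← h3]
  apply mul_le_mul_of_nonneg_left h1 (by positivity)

lemma CC_le_one (hk : 0 < k) (ht : 0 < t) (i : Fin k) : CC k t i i ≤ 1 := by
  rw [← CC_row k t hk ht i]
  exact Finset.single_le_sum (fun i' _ => CC_nonneg k t hk ht i i') (Finset.mem_univ i)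

lemma CC_col (hk : 0 < k) (ht : 0 < t) (i' : Fin k) : ∑ i, CC k t i i' = 1 := by
  rw [Finset.sum_congr rfl fun i _ => CC_symm k t i i']
  exact CC_row k t hk ht i'

/-- column error bound. -/
lemma colerr (hk : 0 < k) (ht : 0 < t) (v : Fin k → ℝ) (hv : ∀ i, 0 ≤ v i) (hv1 : ∑ i, v i = 1) :
    ∑ i, |(∑ i', CC k t i i' * v i') - v i| ≤ (k : ℝ) / t := by
  have hK := hkR k hk; have hT := htR t ht
  have step1 : ∀ i, |(∑ i', CC k t i i' * v i') - v i|
      ≤ ∑ i', CC k t i i' * |v i' - v i| := by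
    intro i
    have hvi : v i = ∑ i', CC k t i i' * v i := by
      rw [← Finset.sum_mul, CC_row k t hk ht i, one_mul]
    calc |(∑ i', CC k t i i' * v i') - v i|
        = |∑ i', (CC k t i i' * v i' - CC k t i i' * v i)| := by
          rw [Finset.sum_sub_distrib, ← hvi]
      _ ≤ ∑ i', |CC k t i i' * v i' - CC k t i i' * v i| := Finset.abs_sum_le_sum_abs _ _
      _ = ∑ i', CC k t i i' * |v i' - v i| := by
          refine Finset.sum_congr rfl fun i' _ => ?_
          rw [← mul_sub, abs_mul, abs_of_nonneg (CC_nonneg k t hk ht i i')]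
  have step2 : ∀ i i', CC k t i i' * |v i' - v i|
      ≤ CC k t i i' * v i' + CC k t i i' * v i
        - (if i' = i then 2 * CC k t i i * v i else 0) := by
    intro i i'
    by_cases h : i' = i
    · subst h
      simp only [if_pos, sub_self, abs_zero, mul_zero]
      linarith
    · simp only [if_neg h]
      have habs : |v i' - v i| ≤ v i' + v i := by
        rw [abs_sub_le_iff]; constructor <;> nlinarith [hv i, hv i']
      nlinarith [CC_nonneg k t hk ht i i', mul_le_mul_of_nonneg_left habs (CC_nonneg k t hk ht i i')]
  calc ∑ i, |(∑ i', CC k t i i' * v i') - v i|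
      ≤ ∑ i, ∑ i', CC k t i i' * |v i' - v i| := Finset.sum_le_sum fun i _ => step1 i
    _ ≤ ∑ i, ∑ i', (CC k t i i' * v i' + CC k t i i' * v i
        - (if i' = i then 2 * CC k t i i * v i else 0)) :=
        Finset.sum_le_sum fun i _ => Finset.sum_le_sum fun i' _ => step2 i i'
    _ = (∑ i, ∑ i', CC k t i i' * v i') + (∑ i, ∑ i', CC k t i i' * v i)
        - ∑ i, 2 * CC k t i i * v i := by
        rw [← Finset.sum_add_distrib, ← Finset.sum_sub_distrib]
        refine Finset.sum_congr rfl fun i _ => ?_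
        rw [Finset.sum_sub_distrib, Finset.sum_add_distrib]
        congr 1
        rw [Finset.sum_ite_eq' Finset.univ i (fun _ => 2 * CC k t i i * v i)]
        simp
    _ ≤ 1 + 1 - ∑ i, 2 * (1 - (k : ℝ) / (2 * t)) * v i := by
        have e1 : (∑ i, ∑ i', CC k t i i' * v i') = 1 := by
          rw [Finset.sum_comm]
          calc ∑ i', ∑ i, CC k t i i' * v i' = ∑ i', (∑ i, CC k t i i') * v i' := by
                refine Finset.sum_congr rfl fun i' _ => (Finset.sum_mul _ _ _).symm
            _ = ∑ i', v i' := by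
                refine Finset.sum_congr rfl fun i' _ => by rw [CC_col k t hk ht i', one_mul]
            _ = 1 := hv1
        have e2 : (∑ i, ∑ i', CC k t i i' * v i) = 1 := by
          calc ∑ i, ∑ i', CC k t i i' * v i = ∑ i, (∑ i', CC k t i i') * v i := by
                refine Finset.sum_congr rfl fun i _ => (Finset.sum_mul _ _ _).symm
            _ = ∑ i, v i := by
                refine Finset.sum_congr rfl fun i _ => by rw [CC_row k t hk ht i, one_mul]
            _ = 1 := hv1
        rw [e1, e2]
        have : ∑ i, 2 * (1 - (k : ℝ) / (2 * t)) * v i ≤ ∑ i, 2 * CC k t i i * v i := by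
          refine Finset.sum_le_sum fun i _ => ?_
          have := CC_diag k t hk ht i
          nlinarith [hv i]
        linarith
    _ = (k : ℝ) / t := by
        rw [← Finset.mul_sum, hv1]
        field_simp
        ring
end cclem

/-- composing kernels. -/
lemma Kset_comp {k t n : ℕ} (hk : 0 < k) (ht : 0 < t)
    {N : Matrix (Fin k) (Fin t) ℝ} {P : Matrix (Fin t) (Fin n) ℝ}
    (hN : N ∈ Kset k (Fin t)) (hP : P ∈ Kset t (Fin n)) : N * P ∈ Kset k (Fin n) := by
  obtain ⟨hN0, hNr, hNc⟩ := hN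
  obtain ⟨hP0, hPr, hPc⟩ := hP
  simp only [Fintype.card_fin] at hNr hPr ⊢
  have hTn : (t : ℝ) ≠ 0 := Nat.cast_ne_zero.mpr ht.ne'
  refine ⟨fun i j => ?_, fun i => ?_, fun j => ?_⟩
  · rw [Matrix.mul_apply]
    exact Finset.sum_nonneg fun m _ => mul_nonneg (hN0 i m) (hP0 m j)
  · calc ∑ j, (N * P) i j = ∑ j, ∑ m, N i m * P m j := by
          refine Finset.sum_congr rfl fun j _ => Matrix.mul_apply
      _ = ∑ m, N i m * ∑ j, P m j := by
          rw [Finset.sum_comm]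
          exact Finset.sum_congr rfl fun m _ => (Finset.mul_sum _ _ _).symm
      _ = ∑ m, N i m * ((n : ℝ) / t) := by
          exact Finset.sum_congr rfl fun m _ => by rw [hPr m]
      _ = ((t : ℝ) / k) * ((n : ℝ) / t) := by rw [← Finset.sum_mul, hNr i]
      _ = (n : ℝ) / k := by field_simp
      _ = (Fintype.card (Fin n) : ℝ) / k := by simp
  · calc ∑ i, (N * P) i j = ∑ i, ∑ m, N i m * P m j := by
          refine Finset.sum_congr rfl fun i _ => Matrix.mul_apply
      _ = ∑ m, (∑ i, N i m) * P m j := by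
          rw [Finset.sum_comm]
          exact Finset.sum_congr rfl fun m _ => (Finset.sum_mul _ _ _).symm
      _ = ∑ m, P m j := Finset.sum_congr rfl fun m _ => by rw [hNc m, one_mul]
      _ = 1 := hPc j

lemma quad {α β γ δ : Type*} [Fintype α] [Fintype β] [Fintype γ] [Fintype δ]
    (F : α → β → γ → δ → ℝ) :
    ∑ i, ∑ j, ∑ b, ∑ a, F i j b a = ∑ b, ∑ a, ∑ i, ∑ j, F i j b a := by
  have inner : ∀ (g : β → γ → δ → ℝ),
      ∑ j, ∑ b, ∑ a, g j b a = ∑ b, ∑ a, ∑ j, g j b a := by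
    intro g
    rw [Finset.sum_comm]
    exact Finset.sum_congr rfl fun b _ => Finset.sum_comm
  calc ∑ i, ∑ j, ∑ b, ∑ a, F i j b a
      = ∑ i, ∑ b, ∑ a, ∑ j, F i j b a :=
        Finset.sum_congr rfl fun i _ => inner (F i)
    _ = ∑ b, ∑ i, ∑ a, ∑ j, F i j b a := Finset.sum_comm
    _ = ∑ b, ∑ a, ∑ i, ∑ j, F i j b a :=
        Finset.sum_congr rfl fun b _ => Finset.sum_comm

lemma quadfac {α β γ δ : Type*} [Fintype α] [Fintype β] [Fintype γ] [Fintype δ]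
    (f : δ → γ → ℝ) (g : α → δ → ℝ) (h : β → γ → ℝ) :
    ∑ i : α, ∑ j : β, ∑ b : γ, ∑ a : δ, f a b * (g i a * h j b)
      = ∑ b : γ, ∑ a : δ, f a b * ((∑ i, g i a) * (∑ j, h j b)) := by
  rw [quad]
  refine Finset.sum_congr rfl fun b _ => Finset.sum_congr rfl fun a _ => ?_
  rw [Finset.sum_mul_sum, Finset.mul_sum]
  exact Finset.sum_congr rfl fun i _ => (Finset.mul_sum _ _ _).symm

end Stmt12Aux

open Stmt12Aux

/-- For a nonnegative `n × n` matrix `S` with `γ(S) = c`, the ℓ¹-Hausdorff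
distance between `C(C(S,t),k)` and `C(S,k)` is at most `2ck/t`. -/
theorem stmt_12 (c : ℝ) (hc : 0 < c) (k t : ℕ) (hk : 0 < k) (ht : 0 < t)
    (n : ℕ) (S : Matrix (Fin n) (Fin n) ℝ) (hnn : ∀ i j, 0 ≤ S i j) (hγ : gamma S = c) :
    hdistLE (⋃ X ∈ matShape S t, matShape X k) (matShape S k) (2 * c * k / t) := by
  have hKR : (0:ℝ) < k := by exact_mod_cast hk
  have hTR : (0:ℝ) < t := by exact_mod_cast ht
  have hεnn : (0:ℝ) ≤ 2 * c * k / t := by positivity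
  constructor
  · -- every element of C(C(S,t),k) already lies in C(S,k)
    intro X hX
    refine ⟨X, ?_, by simp [l1]; positivity⟩
    rw [Set.mem_iUnion₂] at hX
    obtain ⟨Z, hZ, hXZ⟩ := hX
    obtain ⟨P, hP, rfl⟩ := hZ
    obtain ⟨N, hN, rfl⟩ := hXZ
    exact ⟨N * P, Kset_comp hk ht hN hP, by
      simp only [Matrix.transpose_mul, Matrix.mul_assoc]⟩
  · -- the hard direction
    rintro Y ⟨M, hM, rfl⟩
    obtain ⟨hM0, hMr, hMc⟩ := hM
    simp only [Fintype.card_fin] at hMr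
    set N : Matrix (Fin k) (Fin t) ℝ := Matrix.of fun i m => oo k t i m with hNdef
    set P : Matrix (Fin t) (Fin n) ℝ :=
      Matrix.of (fun m j => ((k:ℝ)/t) * ∑ i, oo k t i m * M i j) with hPdef
    have hN : N ∈ Kset k (Fin t) := by
      refine ⟨fun i m => oo_nonneg k t i m, fun i => ?_, fun m => ?_⟩
      · simp only [Fintype.card_fin]
        exact sum_oo_row k t hk i
      · exact sum_oo_col k t hk m
    have hP : P ∈ Kset t (Fin n) := by
      refine ⟨fun m j => ?_, fun m => ?_, fun j => ?_⟩
      · exact mul_nonneg (by positivity)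
          (Finset.sum_nonneg fun i _ => mul_nonneg (oo_nonneg k t i m) (hM0 i j))
      · show ∑ j, ((k:ℝ)/t) * ∑ i, oo k t i m * M i j = _
        simp only [Fintype.card_fin]
        rw [← Finset.mul_sum, Finset.sum_comm]
        have : ∀ i, ∑ j, oo k t i m * M i j = oo k t i m * ((n:ℝ)/k) := by
          intro i; rw [← Finset.mul_sum, hMr i]
        rw [Finset.sum_congr rfl fun i _ => this i, ← Finset.sum_mul, sum_oo_col k t hk m]
        field_simp
      · show ∑ m, ((k:ℝ)/t) * ∑ i, oo k t i m * M i j = 1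
        rw [← Finset.mul_sum, Finset.sum_comm]
        have : ∀ i, ∑ m, oo k t i m * M i j = ((t:ℝ)/k) * M i j := by
          intro i; rw [← Finset.sum_mul, sum_oo_row k t hk i]
        rw [Finset.sum_congr rfl fun i _ => this i, ← Finset.mul_sum, hMc j]
        field_simp
    set M' : Matrix (Fin k) (Fin n) ℝ := N * P with hM'def
    have hM'app : ∀ i j, M' i j = ∑ i', CC k t i i' * M i' j := by
      intro i j
      have e1 : ∀ m, N i m * P m j
          = ∑ i', ((k:ℝ)/t) * (oo k t i m * oo k t i' m) * M i' j := by
        intro m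
        show oo k t i m * (((k:ℝ)/t) * ∑ i', oo k t i' m * M i' j) = _
        rw [Finset.mul_sum, Finset.mul_sum]
        exact Finset.sum_congr rfl fun i' _ => by ring
      calc M' i j = ∑ m, N i m * P m j := Matrix.mul_apply
        _ = ∑ m, ∑ i', ((k:ℝ)/t) * (oo k t i m * oo k t i' m) * M i' j :=
            Finset.sum_congr rfl fun m _ => e1 m
        _ = ∑ i', ∑ m, ((k:ℝ)/t) * (oo k t i m * oo k t i' m) * M i' j := Finset.sum_comm
        _ = ∑ i', CC k t i i' * M i' j := by
            refine Finset.sum_congr rfl fun i' _ => ?_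
            unfold CC
            rw [Finset.mul_sum, Finset.sum_mul]
    have hNP : N * P ∈ Kset k (Fin n) := Kset_comp hk ht hN hP
    obtain ⟨hM'0, hM'r, hM'c⟩ := hNP
    have hD : ∀ a : Fin n, ∑ i, |M' i a - M i a| ≤ (k:ℝ)/t := by
      intro a
      calc ∑ i, |M' i a - M i a|
          = ∑ i, |(∑ i', CC k t i i' * M i' a) - M i a| :=
            Finset.sum_congr rfl fun i _ => by rw [hM'app i a]
        _ ≤ (k:ℝ)/t := colerr k t hk ht (fun i => M i a) (fun i => hM0 i a) (hMc a)
    refine ⟨M' * S * M'ᵀ, ?_, ?_⟩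
    · rw [Set.mem_iUnion₂]
      refine ⟨P * S * Pᵀ, ⟨P, hP, rfl⟩, ⟨N, hN, ?_⟩⟩
      show N * (P * S * Pᵀ) * Nᵀ = M' * S * M'ᵀ
      rw [hM'def]
      simp only [Matrix.transpose_mul, Matrix.mul_assoc]
    · -- the l1 estimate
      have hentry : ∀ i j : Fin k, (M' * S * M'ᵀ - M * S * Mᵀ) i j
          = ∑ b, ∑ a, (M' i a * S a b * M' j b - M i a * S a b * M j b) := by
        intro i j
        have e1 : ∀ (Q : Matrix (Fin k) (Fin n) ℝ), (Q * S * Qᵀ) i j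
            = ∑ b, ∑ a, Q i a * S a b * Q j b := by
          intro Q
          rw [Matrix.mul_apply]
          refine Finset.sum_congr rfl fun b _ => ?_
          rw [Matrix.mul_apply, Matrix.transpose_apply, Finset.sum_mul]
        rw [Matrix.sub_apply, e1, e1, ← Finset.sum_sub_distrib]
        exact Finset.sum_congr rfl fun b _ => (Finset.sum_sub_distrib _ _).symm
      calc l1 (M' * S * M'ᵀ - M * S * Mᵀ)
          = ∑ i, ∑ j, |∑ b, ∑ a, (M' i a * S a b * M' j b - M i a * S a b * M j b)| := by
            unfold l1
            exact Finset.sum_congr rfl fun i _ => Finset.sum_congr rfl fun j _ => by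
              rw [hentry i j]
        _ ≤ ∑ i, ∑ j, ∑ b, ∑ a, (S a b * (|M' i a - M i a| * M' j b)
            + S a b * (M i a * |M' j b - M j b|)) := by
            refine Finset.sum_le_sum fun i _ => Finset.sum_le_sum fun j _ => ?_
            refine (Finset.abs_sum_le_sum_abs _ _).trans ?_
            refine Finset.sum_le_sum fun b _ => ?_
            refine (Finset.abs_sum_le_sum_abs _ _).trans ?_
            refine Finset.sum_le_sum fun a _ => ?_
            have key : M' i a * S a b * M' j b - M i a * S a b * M j b
                = S a b * ((M' i a - M i a) * M' j b)
                  + S a b * (M i a * (M' j b - M j b)) := by ring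
            rw [key]
            refine (abs_add_le _ _).trans ?_
            rw [abs_mul, abs_mul, abs_mul, abs_mul,
              abs_of_nonneg (hnn a b), abs_of_nonneg (hM'0 j b), abs_of_nonneg (hM0 i a)]
        _ = ∑ i, ∑ j, ∑ b, ∑ a, S a b * (|M' i a - M i a| * M' j b)
            + ∑ i, ∑ j, ∑ b, ∑ a, S a b * (M i a * |M' j b - M j b|) := by
            simp only [Finset.sum_add_distrib]
        _ = ∑ b, ∑ a, S a b * ((∑ i, |M' i a - M i a|) * (∑ j, M' j b))
            + ∑ b, ∑ a, S a b * ((∑ i, M i a) * (∑ j, |M' j b - M j b|)) := by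
            rw [quadfac (f := fun a b => S a b) (g := fun i a => |M' i a - M i a|) (h := fun j b => M' j b),
              quadfac (f := fun a b => S a b) (g := fun i a => M i a) (h := fun j b => |M' j b - M j b|)]
        _ ≤ ∑ b, ∑ a, S a b * ((k:ℝ)/t) + ∑ b, ∑ a, S a b * ((k:ℝ)/t) := by
            refine add_le_add (Finset.sum_le_sum fun b _ => Finset.sum_le_sum fun a _ => ?_)
              (Finset.sum_le_sum fun b _ => Finset.sum_le_sum fun a _ => ?_)
            · rw [hM'c b, mul_one]
              exact mul_le_mul_of_nonneg_left (hD a) (hnn a b)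
            · rw [hMc a, one_mul]
              exact mul_le_mul_of_nonneg_left (hD b) (hnn a b)
        _ = 2 * c * k / t := by
            rw [← Finset.sum_add_distrib]
            have : ∀ b, (∑ a, S a b * ((k:ℝ)/t)) + ∑ a, S a b * ((k:ℝ)/t)
                = ∑ a, S a b * (2 * (k:ℝ)/t) := by
              intro b
              rw [← Finset.sum_add_distrib]
              exact Finset.sum_congr rfl fun a _ => by ring
            rw [Finset.sum_congr rfl fun b _ => this b]
            have hg : ∑ b, ∑ a, S a b = c := by
              rw [Finset.sum_comm]; exact hγ
            calc ∑ b, ∑ a, S a b * (2 * (k:ℝ)/t)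
                = (∑ b, ∑ a, S a b) * (2 * (k:ℝ)/t) := by
                  rw [Finset.sum_mul]
                  exact Finset.sum_congr rfl fun b _ => (Finset.sum_mul _ _ _).symm
              _ = 2 * c * (k:ℝ) / t := by rw [hg]; ring
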